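/- For every finite set W ⊆ ℤ and every n ≥ 1, let D be the set of all sums of at most n − 1 elements of W (with repetition allowed, and including the empty sum 0). Then the W-linear graph on D is (n,W)-universal; in particular there exists an (n,W)-universal graph whose size is the number of such sums. -/

import Mathlib

open Filter


/-- A finite path: a list of consecutive edges, all belonging to `E`,
starting at `u` (when nonempty). -/
def FinPath {V : Type} (E : Set (V × ℤ × V)) (u : V) (p : List (V × ℤ × V)) : Prop :=
  (∀ e ∈ p, e ∈ E) ∧ List.Chain' (fun e e' => e.2.2 = e'.1) p ∧
    ∀ h : p ≠ [], (p.head h).1 = u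

/-- The last vertex of a finite path starting at `u` (which is `u` itself for the empty path). -/
def lastV {V : Type} (u : V) (p : List (V × ℤ × V)) : V :=
  (p.getLastD (u, 0, u)).2.2

/-- An infinite path: a sequence of consecutive edges, all belonging to `E`. -/
def InfPath {V : Type} (E : Set (V × ℤ × V)) (π : ℕ → V × ℤ × V) : Prop :=
  (∀ i, π i ∈ E) ∧ ∀ i, (π i).2.2 = (π (i + 1)).1

/-- The total weight of a finite path. -/
def pathWeight {V : Type} (p : List (V × ℤ × V)) : ℤ :=
  (p.map fun e => e.2.1).sum

/-- A sequence of integer weights satisfies mean payoff if the liminf of the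
averages of its prefixes is nonnegative. -/
def MeanPayoffSeq (w : ℕ → ℤ) : Prop :=
  0 ≤ Filter.atTop.liminf (fun ℓ : ℕ => (∑ i ∈ Finset.range ℓ, (w i : ℝ)) / (ℓ : ℝ))

/-- A graph (given by its edge set) satisfies mean payoff if all its infinite paths do. -/
def SatMP {V : Type} (E : Set (V × ℤ × V)) : Prop :=
  ∀ π : ℕ → V × ℤ × V, InfPath E π → MeanPayoffSeq (fun i => (π i).2.1)

/-- A cycle: a nonempty finite path whose first and last vertices coincide. -/
def IsCycle {V : Type} (E : Set (V × ℤ × V)) (p : List (V × ℤ × V)) : Prop :=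
  p ≠ [] ∧ ∃ v, FinPath E v p ∧ lastV v p = v

/-- A `W`-graph: a finite set of vertices, edges labelled by weights in `W`,
and an initial vertex from which every vertex is reachable. -/
structure WGraph (W : Finset ℤ) where
  V : Type
  fin : Fintype V
  E : Set (V × ℤ × V)
  init : V
  wt : ∀ e ∈ E, e.2.1 ∈ W
  reach : ∀ v : V, ∃ p, FinPath E init p ∧ lastV init p = v

attribute [instance] WGraph.fin

/-- The `W`-linear graph on a set `A ⊆ ℤ`: vertices are the elements of `A`, and
for `v, v' ∈ A` and `w ∈ W` there is an edge `(v, w, v')` whenever `v' - v ≤ w`. -/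
def LinE (W : Finset ℤ) (A : Set ℤ) : Set (ℤ × ℤ × ℤ) :=
  {e | e.1 ∈ A ∧ e.2.2 ∈ A ∧ e.2.1 ∈ W ∧ e.2.2 - e.1 ≤ e.2.1}

/-- A homomorphism of labelled graphs (no requirement on initial vertices). -/
def IsHom {V U : Type} (E : Set (V × ℤ × V)) (E' : Set (U × ℤ × U)) (φ : V → U) : Prop :=
  ∀ e ∈ E, (φ e.1, e.2.1, φ e.2.2) ∈ E'

/-- A graph (given by its edge set) is `(n,W)`-universal if it satisfies mean payoff and
every `(n,W)`-graph satisfying mean payoff admits a homomorphism into it. -/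
def Universal (n : ℕ) (W : Finset ℤ) {U : Type} (EU : Set (U × ℤ × U)) : Prop :=
  SatMP EU ∧
    ∀ G : WGraph W, Fintype.card G.V ≤ n → SatMP G.E → ∃ φ : G.V → U, IsHom G.E EU φ

/-- The set of weights `(-N, N)`: integers `w` with `-N < w < N`. -/
noncomputable def Wball (N : ℕ) : Finset ℤ := Finset.Ioo (-(N : ℤ)) (N : ℤ)

/-- `φ` is the distance function from the initial vertex: `φ v` is the minimum total
weight of a finite path from the initial vertex to `v`. -/
def IsDistFrom {W : Finset ℤ} (G : WGraph W) (φ : G.V → ℤ) : Prop :=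
  ∀ v : G.V,
    (∃ p, FinPath G.E G.init p ∧ lastV G.init p = v ∧ pathWeight p = φ v) ∧
    ∀ p, FinPath G.E G.init p → lastV G.init p = v → φ v ≤ pathWeight p

/-- The set of all sums of at most `n - 1` elements of `W` (with repetitions allowed,
including the empty sum `0`). -/
def sumsUpTo (W : Finset ℤ) (n : ℕ) : Set ℤ :=
  {z | ∃ l : List ℤ, (∀ x ∈ l, x ∈ W) ∧ l.length ≤ n - 1 ∧ l.sum = z}


section AuxPaths
variable {V : Type} {E : Set (V × ℤ × V)} {u : V}

lemma lastV_nil : lastV u ([] : List (V × ℤ × V)) = u := rfl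

lemma lastV_append (u : V) (a b : List (V × ℤ × V)) :
    lastV u (a ++ b) = lastV (lastV u a) b := by
  rcases List.eq_nil_or_concat b with rfl | ⟨c, e, rfl⟩
  · simp [lastV]
  · simp only [List.concat_eq_append, lastV, ← List.append_assoc, List.getLastD_concat]

lemma pathWeight_append (a b : List (V × ℤ × V)) :
    pathWeight (a ++ b) = pathWeight a + pathWeight b := by
  simp [pathWeight]

lemma head1_iff (p : List (V × ℤ × V)) :
    (∀ h : p ≠ [], (p.head h).1 = u) ↔ ∀ x ∈ p.head?, x.1 = u := by
  cases p <;> simp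

lemma getLast?_eq_lastV (p : List (V × ℤ × V)) (h : p ≠ []) :
    ∃ x, p.getLast? = some x ∧ x.2.2 = lastV u p := by
  refine ⟨p.getLast h, List.getLast?_eq_getLast h, ?_⟩
  rw [lastV, List.getLastD_eq_getLast?, List.getLast?_eq_getLast h]
  rfl

lemma finPath_append {a b : List (V × ℤ × V)} :
    FinPath E u (a ++ b) ↔ FinPath E u a ∧ FinPath E (lastV u a) b := by
  simp only [FinPath, head1_iff, List.Chain', List.isChain_append, List.mem_append]
  rcases eq_or_ne a [] with rfl | ha
  · simp [lastV_nil]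
  obtain ⟨x, hx, hxl⟩ := getLast?_eq_lastV (u := u) a ha
  constructor
  · rintro ⟨hE, ⟨hca, hcb, hlink⟩, hh⟩
    refine ⟨⟨fun e he => hE e (Or.inl he), hca, ?_⟩,
            ⟨fun e he => hE e (Or.inr he), hcb, ?_⟩⟩
    · intro y hy
      apply hh
      rw [List.head?_append_of_ne_nil _ ha] at *
      exact hy
    · intro y hy
      rw [← hxl]
      exact (hlink x hx y hy).symm
  · rintro ⟨⟨hEa, hca, hha⟩, ⟨hEb, hcb, hhb⟩⟩
    refine ⟨fun e he => he.elim (hEa e) (hEb e), ⟨hca, hcb, ?_⟩, ?_⟩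
    · intro x' hx' y hy
      rw [hx] at hx'
      cases hx'
      rw [hxl]
      exact (hhb y hy).symm
    · intro y hy
      apply hha
      rwa [List.head?_append_of_ne_nil _ ha] at hy

end AuxPaths

section AuxShorten
variable {V : Type} [Fintype V] {E : Set (V × ℤ × V)} {u : V}

lemma shorten (hcyc : ∀ p, IsCycle E p → 0 ≤ pathWeight p)
    (p : List (V × ℤ × V)) (hp : FinPath E u p) (hlen : Fintype.card V ≤ p.length) :
    ∃ q, FinPath E u q ∧ lastV u q = lastV u p ∧ q.length < p.length ∧
      pathWeight q ≤ pathWeight p := by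
  obtain ⟨x, y, hxy, hf⟩ := Fintype.exists_ne_map_eq_of_card_lt
    (fun k : Fin (p.length + 1) => lastV u (p.take (k : ℕ)))
    (by simpa using Nat.lt_succ_of_le hlen)
  obtain ⟨i, j, hij, hj, hv⟩ : ∃ i j : ℕ, i < j ∧ j ≤ p.length ∧
      lastV u (p.take i) = lastV u (p.take j) := by
    rcases lt_or_gt_of_ne hxy with h | h
    · exact ⟨x, y, h, Nat.lt_succ_iff.mp y.isLt, hf⟩
    · exact ⟨y, x, h, Nat.lt_succ_iff.mp x.isLt, hf.symm⟩
  set a := p.take i with ha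
  set m := (p.drop i).take (j - i) with hm
  set b := p.drop j with hb
  have h1 : a ++ m = p.take j := by
    rw [ha, hm, ← List.take_add]
    congr 1
    omega
  have h2 : (a ++ m) ++ b = p := by rw [h1, hb, List.take_append_drop]
  have hp' := hp
  rw [← h2, finPath_append] at hp'
  obtain ⟨hpam, hpb⟩ := hp'
  have hpam' := hpam
  rw [finPath_append] at hpam'
  obtain ⟨hpa, hpm⟩ := hpam'
  have hlam : lastV u (a ++ m) = lastV u a := by
    rw [h1, ← hv, ha]
  have hmne : m ≠ [] := by
    have hlm : m.length = j - i := by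
      rw [hm, List.length_take, List.length_drop]
      omega
    intro hc
    rw [hc] at hlm
    simp at hlm
    omega
  have hmcyc : 0 ≤ pathWeight m := by
    refine hcyc m ⟨hmne, lastV u a, hpm, ?_⟩
    rw [← lastV_append, hlam]
  refine ⟨a ++ b, ?_, ?_, ?_, ?_⟩
  · rw [finPath_append]
    exact ⟨hpa, by rwa [hlam] at hpb⟩
  · rw [lastV_append, ← hlam, ← lastV_append, h2]
  · have hal : a.length = i := by rw [ha, List.length_take]; omega
    have hbl : b.length = p.length - j := by rw [hb, List.length_drop]
    rw [List.length_append, hal, hbl]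
    omega
  · calc pathWeight (a ++ b) = pathWeight a + pathWeight b := pathWeight_append a b
    _ ≤ (pathWeight a + pathWeight m) + pathWeight b := by omega
    _ = pathWeight p := by rw [← pathWeight_append, ← pathWeight_append, h2]

lemma short_path (hcyc : ∀ p, IsCycle E p → 0 ≤ pathWeight p)
    (p : List (V × ℤ × V)) (hp : FinPath E u p) :
    ∃ q, FinPath E u q ∧ lastV u q = lastV u p ∧ q.length < Fintype.card V ∧
      pathWeight q ≤ pathWeight p := by
  obtain ⟨n, hn⟩ : ∃ n, p.length = n := ⟨_, rfl⟩
  induction n using Nat.strong_induction_on generalizing p with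
  | _ n ih =>
    subst hn
    rcases lt_or_ge p.length (Fintype.card V) with h | h
    · exact ⟨p, hp, rfl, h, le_refl _⟩
    · obtain ⟨q, hq, hql, hqlen, hqw⟩ := shorten hcyc p hp h
      obtain ⟨r, hr, hrl, hrlen, hrw⟩ := ih q.length (by omega) q hq rfl
      exact ⟨r, hr, by rw [hrl, hql], hrlen, le_trans hrw hqw⟩

end AuxShorten

section AuxNNC
variable {V : Type} {E : Set (V × ℤ × V)}

lemma no_neg_cycle (M : ℤ) (hM : ∀ e ∈ E, |e.2.1| ≤ M) (h : SatMP E) :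
    ∀ p, IsCycle E p → 0 ≤ pathWeight p := by
  rintro p ⟨hne, v, hp, hlast⟩
  by_contra hneg
  push_neg at hneg
  set L := p.length with hLdef
  have hL0 : 0 < L := List.length_pos_iff.mpr hne
  set d : V × ℤ × V := (v, 0, v) with hd
  set π : ℕ → V × ℤ × V := fun i => p.getD (i % L) d with hπ
  have hgetmem : ∀ i : ℕ, π i ∈ p := by
    intro i
    have hi : i % L < L := Nat.mod_lt _ hL0
    rw [hπ]
    simp only
    rw [List.getD_eq_getElem p d hi]
    exact List.getElem_mem _
  have hchain := hp.2.1
  simp only [List.Chain', List.isChain_iff_getElem] at hchain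
  have hinf : InfPath E π := by
    refine ⟨fun i => hp.1 _ (hgetmem i), ?_⟩
    intro i
    have hi : i % L < L := Nat.mod_lt _ hL0
    have hmod : (i % L + 1) % L = (i + 1) % L := Nat.mod_add_mod i L 1
    rcases Nat.lt_or_ge (i % L + 1) L with hlt | hge
    · have hsucc : (i + 1) % L = i % L + 1 := by
        rw [← hmod, Nat.mod_eq_of_lt hlt]
      show (p.getD (i % L) d).2.2 = (p.getD ((i+1) % L) d).1
      rw [hsucc, List.getD_eq_getElem p d hi, List.getD_eq_getElem p d hlt]
      have := hchain (i % L) (by omega)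
      simpa using this
    · have heq : i % L = L - 1 := by omega
      have hsucc : (i + 1) % L = 0 := by
        rw [← hmod, heq, Nat.sub_add_cancel hL0, Nat.mod_self]
      show (p.getD (i % L) d).2.2 = (p.getD ((i+1) % L) d).1
      rw [hsucc, heq, List.getD_eq_getElem p d (by omega),
        List.getD_eq_getElem p d (by omega : 0 < p.length)]
      have h1 : p[L-1].2.2 = v := by
        rw [← hlast, lastV, List.getLastD_eq_getLast?, List.getLast?_eq_getLast hne,
          Option.getD_some, List.getLast_eq_getElem]
      have h2 : p[0].1 = v := by
        have := hp.2.2 hne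
        rwa [List.head_eq_getElem] at this
      rw [h1, h2]
  set f : ℕ → ℝ := fun ℓ => (∑ i ∈ Finset.range ℓ, ((π i).2.1 : ℝ)) / (ℓ : ℝ) with hf
  have hmp : 0 ≤ atTop.liminf f := h π hinf
  have hone' : (∑ r ∈ Finset.range L, (p.getD r d).2.1) = pathWeight p := by
    rw [Finset.sum_range, pathWeight]
    conv_rhs => rw [show p = List.ofFn (fun i : Fin p.length => p[(i:ℕ)]) from
      (List.ofFn_getElem (xs := p)).symm]
    rw [List.map_ofFn, List.sum_ofFn]
    refine Finset.sum_congr rfl fun i _ => ?_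
    rw [List.getD_eq_getElem p d i.isLt]
    rfl
  have hblock : ∀ k : ℕ, (∑ i ∈ Finset.range (k * L), ((π i).2.1 : ℝ))
      = (k : ℝ) * (pathWeight p : ℝ) := by
    have hone : (∑ r ∈ Finset.range L, ((p.getD r d).2.1 : ℝ)) = (pathWeight p : ℝ) := by
      rw [← hone']
      push_cast
      rfl
    intro k
    induction k with
    | zero => simp
    | succ k ih =>
      rw [Nat.succ_mul, Finset.sum_range_add, ih]
      have heq2 : (∑ x ∈ Finset.range L, ((π (k * L + x)).2.1 : ℝ))
          = ∑ r ∈ Finset.range L, ((p.getD r d).2.1 : ℝ) := by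
        refine Finset.sum_congr rfl fun x hx => ?_
        simp only [Finset.mem_range] at hx
        have hmx : (k * L + x) % L = x := by
          rw [Nat.add_comm, Nat.mul_comm, Nat.add_mul_mod_self_left, Nat.mod_eq_of_lt hx]
        rw [hπ]
        simp only [hmx]
      rw [heq2, hone]
      push_cast
      ring
  have hM0 : (0:ℝ) ≤ (M:ℝ) := by
    have h1 := hM _ (hp.1 _ (hgetmem 0))
    have h2 : (0:ℤ) ≤ M := le_trans (abs_nonneg _) h1
    exact_mod_cast h2
  have hbound : ∀ ℓ, -(M : ℝ) ≤ f ℓ := by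
    intro ℓ
    rcases Nat.eq_zero_or_pos ℓ with rfl | hℓ
    · simpa [hf] using hM0
    · rw [hf]
      simp only
      rw [le_div_iff₀ (by exact_mod_cast hℓ)]
      have hterm : ∀ i ∈ Finset.range ℓ, -(M:ℝ) ≤ ((π i).2.1 : ℝ) := by
        intro i _
        have h1 := hM _ (hp.1 _ (hgetmem i))
        have h2 : -M ≤ (π i).2.1 := by
          have := neg_abs_le ((π i).2.1)
          omega
        exact_mod_cast h2
      calc -(M:ℝ) * ℓ = ∑ _i ∈ Finset.range ℓ, (-(M:ℝ)) := by
            rw [Finset.sum_const, Finset.card_range]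
            ring
      _ ≤ ∑ i ∈ Finset.range ℓ, ((π i).2.1 : ℝ) := Finset.sum_le_sum hterm
  have hfreq : ∃ᶠ ℓ in atTop, f ℓ ≤ (pathWeight p : ℝ) / (L : ℝ) := by
    rw [Filter.frequently_atTop]
    intro N
    refine ⟨(N+1) * L, ?_, ?_⟩
    · calc N ≤ N + 1 := Nat.le_succ N
      _ ≤ (N+1) * L := Nat.le_mul_of_pos_right _ hL0
    · rw [hf]
      simp only
      rw [hblock (N+1)]
      have hN1 : ((N:ℝ)+1) ≠ 0 := by positivity
      push_cast
      rw [mul_div_mul_left _ _ hN1]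
  have hlim : atTop.liminf f ≤ (pathWeight p : ℝ) / (L : ℝ) :=
    liminf_le_of_frequently_le hfreq (Filter.isBoundedUnder_of ⟨-(M:ℝ), fun ℓ => hbound ℓ⟩)
  have hnegr : (pathWeight p : ℝ) / (L : ℝ) < 0 :=
    div_neg_of_neg_of_pos (by exact_mod_cast hneg) (by exact_mod_cast hL0)
  linarith

end AuxNNC

lemma satMP_linE {W : Finset ℤ} {A : Set ℤ} (C : ℤ) (hC : ∀ a ∈ A, |a| ≤ C) :
    SatMP (LinE W A) := by
  intro π hπ
  set f : ℕ → ℝ := fun ℓ => (∑ i ∈ Finset.range ℓ, ((π i).2.1 : ℝ)) / (ℓ : ℝ) with hf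
  show 0 ≤ atTop.liminf f
  have hC0 : 0 ≤ C := le_trans (abs_nonneg _) (hC _ (hπ.1 0).1)
  have htel : ∀ ℓ : ℕ, (π ℓ).1 - (π 0).1 ≤ ∑ i ∈ Finset.range ℓ, (π i).2.1 := by
    intro ℓ
    induction ℓ with
    | zero => simp
    | succ ℓ ih =>
      rw [Finset.sum_range_succ]
      have hedge := (hπ.1 ℓ).2.2.2
      have hch := hπ.2 ℓ
      omega
  have hSlow : ∀ ℓ : ℕ, -(2*C) ≤ ∑ i ∈ Finset.range ℓ, (π i).2.1 := by
    intro ℓ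
    have h1 := abs_le.mp (hC _ (hπ.1 ℓ).1)
    have h2 := abs_le.mp (hC _ (hπ.1 0).1)
    have := htel ℓ
    omega
  set M : ℕ := W.sup Int.natAbs with hMdef
  have hWub : ∀ i, (π i).2.1 ≤ (M:ℤ) := by
    intro i
    have h1 : (π i).2.1.natAbs ≤ M := Finset.le_sup (hπ.1 i).2.2.1
    omega
  have hub : ∀ ℓ, f ℓ ≤ (M:ℝ) := by
    intro ℓ
    rcases Nat.eq_zero_or_pos ℓ with rfl | hℓ
    · simp [hf]
    · rw [hf]
      simp only
      rw [div_le_iff₀ (by exact_mod_cast hℓ)]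
      calc (∑ i ∈ Finset.range ℓ, ((π i).2.1:ℝ)) ≤ ∑ _i ∈ Finset.range ℓ, (M:ℝ) :=
            Finset.sum_le_sum (fun i _ => by exact_mod_cast hWub i)
      _ = (M:ℝ) * ℓ := by rw [Finset.sum_const, Finset.card_range]; ring
  have hcob : IsCoboundedUnder (· ≥ ·) atTop f :=
    (Filter.isBoundedUnder_of ⟨(M:ℝ), hub⟩).isCoboundedUnder_ge
  have key : ∀ ε : ℝ, 0 < ε → -ε ≤ atTop.liminf f := by
    intro ε hε
    refine le_liminf_of_le hcob ?_
    obtain ⟨N, hN⟩ := exists_nat_gt ((2*(C:ℝ))/ε)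
    filter_upwards [Filter.eventually_ge_atTop (N+1)] with ℓ hℓ
    have hℓ0 : (0:ℝ) < (ℓ:ℝ) := by
      have : 1 ≤ ℓ := le_trans (Nat.le_add_left 1 N) hℓ
      exact_mod_cast Nat.lt_of_lt_of_le Nat.zero_lt_one this
    rw [hf]
    simp only
    rw [le_div_iff₀ hℓ0]
    have hℓN : ((N:ℝ)) < (ℓ:ℝ) := by exact_mod_cast Nat.lt_of_lt_of_le (Nat.lt_succ_self N) hℓ
    have h2 : (2*(C:ℝ)) < ε * ℓ := by
      have := (div_lt_iff₀ hε).mp hN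
      nlinarith
    have h3 : (-(2*(C:ℝ))) ≤ ∑ i ∈ Finset.range ℓ, ((π i).2.1:ℝ) := by
      exact_mod_cast hSlow ℓ
    nlinarith
  have hfin : ∀ ε : ℝ, 0 < ε → (0:ℝ) ≤ atTop.liminf f + ε := fun ε hε => by linarith [key ε hε]
  exact le_of_forall_pos_le_add hfin

lemma abs_list_sum_le (l : List ℤ) (M : ℤ) (h : ∀ x ∈ l, |x| ≤ M) :
    |l.sum| ≤ (l.length : ℤ) * M := by
  induction l with
  | nil => simp
  | cons a l ih =>
    simp only [List.sum_cons, List.length_cons]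
    have h1 := h a (List.mem_cons_self)
    have h2 := ih (fun x hx => h x (List.mem_cons_of_mem a hx))
    have h3 := abs_add_le a l.sum
    have h4 : ((l.length + 1 : ℕ) : ℤ) * M = (l.length : ℤ) * M + M := by
      push_cast
      ring
    omega

lemma exists_min_of_finite {S : Set ℤ} (h : S.Finite) (hne : S.Nonempty) :
    ∃ z ∈ S, ∀ y ∈ S, z ≤ y := by
  have hne' : h.toFinset.Nonempty := by
    rwa [Set.Finite.toFinset_nonempty]
  refine ⟨h.toFinset.min' hne', ?_, ?_⟩
  · have := h.toFinset.min'_mem hne'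
    rwa [Set.Finite.mem_toFinset] at this
  · intro y hy
    exact h.toFinset.min'_le y (by rwa [Set.Finite.mem_toFinset])

/-- elements of `W` is `(n,W)`-universal (and this set is finite, so this gives an
`(n,W)`-universal graph whose size is the number of such sums). -/
theorem sums_linear_universal (W : Finset ℤ) (n : ℕ) (hn : 1 ≤ n) :
    (sumsUpTo W n).Finite ∧ Universal n W (LinE W (sumsUpTo W n)) := by
  set M : ℕ := W.sup Int.natAbs with hMdef
  have habs : ∀ w ∈ W, |w| ≤ (M:ℤ) := by
    intro w hw
    have h1 : w.natAbs ≤ M := Finset.le_sup hw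
    rw [Int.abs_eq_natAbs]
    omega
  have hsub : sumsUpTo W n ⊆ Set.Icc (-((n:ℤ) * M)) ((n:ℤ) * M) := by
    rintro z ⟨l, hl, hlen, rfl⟩
    have h1 := abs_list_sum_le l (M:ℤ) (fun x hx => habs x (hl x hx))
    have hM0 : (0:ℤ) ≤ (M:ℤ) := Int.natCast_nonneg M
    have h2 : (l.length : ℤ) ≤ (n:ℤ) := by
      have : l.length ≤ n := le_trans hlen (Nat.sub_le n 1)
      exact_mod_cast this
    have h3 : (l.length : ℤ) * M ≤ (n:ℤ) * M := mul_le_mul_of_nonneg_right h2 hM0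
    have := abs_le.mp (le_trans h1 h3)
    exact Set.mem_Icc.mpr this
  have hfin : (sumsUpTo W n).Finite := (Set.finite_Icc _ _).subset hsub
  refine ⟨hfin, ?_, ?_⟩
  · -- mean payoff of the linear graph
    refine satMP_linE ((n:ℤ) * M) ?_
    intro a ha
    have := Set.mem_Icc.mp (hsub ha)
    rw [abs_le]
    exact this
  · -- universality
    intro G hcard hMP
    have hcyc : ∀ p, IsCycle G.E p → 0 ≤ pathWeight p :=
      no_neg_cycle (M:ℤ) (fun e he => habs _ (G.wt e he)) hMP
    -- membership of short-path weights in sumsUpTo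
    have hmemS : ∀ p, FinPath G.E G.init p → p.length ≤ n - 1 →
        pathWeight p ∈ sumsUpTo W n := by
      intro p hp hlen
      refine ⟨p.map (fun e : G.V × ℤ × G.V => e.2.1), ?_, by simpa using hlen, rfl⟩
      intro x hx
      rw [List.mem_map] at hx
      obtain ⟨e, he, rfl⟩ := hx
      exact G.wt e (hp.1 e he)
    -- the set of weights of short paths to v
    have key : ∀ v : G.V, ∃ z : ℤ,
        (∃ p, FinPath G.E G.init p ∧ lastV G.init p = v ∧ p.length ≤ n - 1 ∧
          pathWeight p = z) ∧
        ∀ z', (∃ p, FinPath G.E G.init p ∧ lastV G.init p = v ∧ p.length ≤ n - 1 ∧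
          pathWeight p = z') → z ≤ z' := by
      intro v
      set S : Set ℤ := {z | ∃ p, FinPath G.E G.init p ∧ lastV G.init p = v ∧
        p.length ≤ n - 1 ∧ pathWeight p = z} with hS
      have hSsub : S ⊆ sumsUpTo W n := by
        rintro z ⟨p, hp, _, hlen, rfl⟩
        exact hmemS p hp hlen
      have hSfin : S.Finite := hfin.subset hSsub
      have hSne : S.Nonempty := by
        obtain ⟨p0, hp0, hl0⟩ := G.reach v
        obtain ⟨q, hq, hql, hqlen, _⟩ := short_path hcyc p0 hp0
        exact ⟨pathWeight q, q, hq, by rw [hql, hl0], by omega, rfl⟩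
      obtain ⟨z, hz, hzmin⟩ := exists_min_of_finite hSfin hSne
      exact ⟨z, hz, hzmin⟩
    choose φ hφmem hφmin using key
    refine ⟨φ, ?_⟩
    intro e he
    have hφsums : ∀ v : G.V, φ v ∈ sumsUpTo W n := by
      intro v
      obtain ⟨p, hp, _, hlen, hw⟩ := hφmem v
      rw [← hw]
      exact hmemS p hp hlen
    refine ⟨hφsums e.1, hφsums e.2.2, G.wt e he, ?_⟩
    -- triangle inequality
    obtain ⟨p, hp, hpl, hplen, hpw⟩ := hφmem e.1
    have hsingle : FinPath G.E (lastV G.init p) [e] := by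
      refine ⟨?_, List.isChain_singleton e, ?_⟩
      · intro x hx
        rw [List.mem_singleton] at hx
        subst hx
        exact he
      · intro _
        rw [hpl]
        rfl
    have hpe : FinPath G.E G.init (p ++ [e]) := finPath_append.mpr ⟨hp, hsingle⟩
    have hlst : lastV G.init (p ++ [e]) = e.2.2 := by
      rw [lastV_append]
      rfl
    obtain ⟨q, hq, hql, hqlen, hqw⟩ := short_path hcyc _ hpe
    have hqS : φ e.2.2 ≤ pathWeight q := by
      refine hφmin e.2.2 _ ⟨q, hq, by rw [hql, hlst], by omega, rfl⟩
    have hwe : pathWeight (p ++ [e]) = φ e.1 + e.2.1 := by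
      rw [pathWeight_append, hpw]
      simp [pathWeight]
    show φ e.2.2 - φ e.1 ≤ e.2.1
    omega
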